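/- Let φ : {2,3,…} → [0,∞) be a function such that {t ≥ 2 : φ(t) > 0} is unbounded. Then the set D_φ = {x ∈ (0,1] : Σₙ φ(dₙ(x)) = ∞} contains a dense G_δ subset of (0,1]; in particular D_φ is comeager in (0,1]. -/

import Mathlib

/-- The first Engel digit `d₁(x) = ⌊1/x⌋ + 1`. -/
noncomputable def engelD1 (x : ℝ) : ℕ := ⌊1 / x⌋₊ + 1

/-- The Engel map `T(x) = d₁(x)·x − 1`. -/
noncomputable def engelT (x : ℝ) : ℝ := (engelD1 x : ℝ) * x - 1

/-- The `n`-th Engel digit (0-indexed): `dₙ₊₁(x) = d₁(Tⁿ(x))`. -/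
noncomputable def engelDigit (x : ℝ) (n : ℕ) : ℕ := engelD1 (engelT^[n] x)

open Set Finset

lemma engelD1_cast (x : ℝ) : (engelD1 x : ℝ) = (⌊1/x⌋₊ : ℝ) + 1 := by
  simp [engelD1]

lemma two_le_engelD1 {x : ℝ} (hx : x ∈ Set.Ioc (0:ℝ) 1) : 2 ≤ engelD1 x := by
  have h1 : (1:ℝ) ≤ 1 / x := one_le_one_div hx.1 hx.2
  have h2 : 1 ≤ ⌊(1:ℝ)/x⌋₊ := Nat.le_floor (by exact_mod_cast h1)
  simp only [engelD1]; omega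

lemma inv_lt_engelD1 {x : ℝ} (hx : 0 < x) : 1 / x < (engelD1 x : ℝ) := by
  rw [engelD1_cast]
  exact Nat.lt_floor_add_one _

lemma engelD1_sub_one_le_inv {x : ℝ} (hx : 0 < x) : (engelD1 x : ℝ) - 1 ≤ 1 / x := by
  rw [engelD1_cast]
  have := Nat.floor_le (show (0:ℝ) ≤ 1/x by positivity)
  linarith

lemma engelT_pos {x : ℝ} (hx : x ∈ Set.Ioc (0:ℝ) 1) : 0 < engelT x := by
  have h := inv_lt_engelD1 hx.1
  rw [div_lt_iff₀ hx.1] at h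
  unfold engelT; nlinarith

lemma engelT_le {x : ℝ} (hx : x ∈ Set.Ioc (0:ℝ) 1) :
    engelT x ≤ 1 / ((engelD1 x : ℝ) - 1) := by
  have hd : 2 ≤ engelD1 x := two_le_engelD1 hx
  have hdR : (2:ℝ) ≤ (engelD1 x : ℝ) := by exact_mod_cast hd
  have h := engelD1_sub_one_le_inv hx.1
  rw [le_div_iff₀ hx.1] at h
  rw [le_div_iff₀ (by linarith : (0:ℝ) < (engelD1 x : ℝ) - 1)]
  unfold engelT; nlinarith

lemma engelT_mem {x : ℝ} (hx : x ∈ Set.Ioc (0:ℝ) 1) : engelT x ∈ Set.Ioc (0:ℝ) 1 := by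
  refine ⟨engelT_pos hx, (engelT_le hx).trans ?_⟩
  have hd : 2 ≤ engelD1 x := two_le_engelD1 hx
  have hdR : (2:ℝ) ≤ (engelD1 x : ℝ) := by exact_mod_cast hd
  rw [div_le_one (by linarith)]; linarith

lemma engelIter_mem {x : ℝ} (hx : x ∈ Set.Ioc (0:ℝ) 1) (n : ℕ) :
    engelT^[n] x ∈ Set.Ioc (0:ℝ) 1 := by
  induction n with
  | zero => simpa using hx
  | succ n ih => rw [Function.iterate_succ_apply']; exact engelT_mem ih

lemma two_le_engelDigit {x : ℝ} (hx : x ∈ Set.Ioc (0:ℝ) 1) (n : ℕ) :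
    2 ≤ engelDigit x n :=
  two_le_engelD1 (engelIter_mem hx n)

lemma engelD1_eq {t : ℕ} (ht : 2 ≤ t) {y : ℝ} (h1 : 1/(t:ℝ) < y)
    (h2 : y ≤ 1/((t:ℝ)-1)) : engelD1 y = t := by
  have htR : (2:ℝ) ≤ (t:ℝ) := by exact_mod_cast ht
  have hy0 : 0 < y := lt_trans (by positivity) h1
  have hb : 1 / y < (t:ℝ) := by
    rw [div_lt_iff₀ hy0]
    rw [div_lt_iff₀ (by linarith : (0:ℝ) < (t:ℝ))] at h1
    linarith
  have ha : (t:ℝ) - 1 ≤ 1 / y := by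
    rw [le_div_iff₀ hy0]
    rw [le_div_iff₀ (by linarith : (0:ℝ) < (t:ℝ) - 1)] at h2
    linarith
  have hfl : ⌊1/y⌋₊ = t - 1 := by
    rw [Nat.floor_eq_iff (by positivity)]
    constructor
    · push_cast [Nat.cast_sub (by omega : 1 ≤ t)]; linarith
    · push_cast [Nat.cast_sub (by omega : 1 ≤ t)]; linarith
  unfold engelD1; omega

lemma engelT_eq {t : ℕ} (ht : 2 ≤ t) {y : ℝ} (h1 : 1/(t:ℝ) < y)
    (h2 : y ≤ 1/((t:ℝ)-1)) : engelT y = (t:ℝ) * y - 1 := by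
  unfold engelT; rw [engelD1_eq ht h1 h2]

lemma engel_branch {d : ℕ} (hd : 2 ≤ d) {y : ℝ} (hy0 : 0 < y)
    (hy1 : y ≤ 1/((d:ℝ)-1)) :
    engelD1 ((y+1)/(d:ℝ)) = d ∧ engelT ((y+1)/(d:ℝ)) = y ∧
      1/(d:ℝ) < (y+1)/(d:ℝ) ∧ (y+1)/(d:ℝ) ≤ 1/((d:ℝ)-1) := by
  have hdR : (2:ℝ) ≤ (d:ℝ) := by exact_mod_cast hd
  have hd0 : (0:ℝ) < (d:ℝ) := by linarith
  have hd1 : (0:ℝ) < (d:ℝ) - 1 := by linarith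
  have hy1' : y * ((d:ℝ) - 1) ≤ 1 := by rwa [← le_div_iff₀ hd1]
  have hlb : 1/(d:ℝ) < (y+1)/(d:ℝ) := by
    gcongr
    linarith
  have hub : (y+1)/(d:ℝ) ≤ 1/((d:ℝ)-1) := by
    rw [div_le_div_iff₀ hd0 hd1]; nlinarith
  have hD : engelD1 ((y+1)/(d:ℝ)) = d := engelD1_eq hd hlb hub
  refine ⟨hD, ?_, hlb, hub⟩
  unfold engelT; rw [hD]; field_simp; ring

lemma engelDigit_mono {x : ℝ} (hx : x ∈ Set.Ioc (0:ℝ) 1) : Monotone (engelDigit x) := by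
  apply monotone_nat_of_le_succ
  intro n
  unfold engelDigit
  rw [Function.iterate_succ_apply']
  set w := engelT^[n] x with hw
  have hwm : w ∈ Set.Ioc (0:ℝ) 1 := engelIter_mem hx n
  have hd : 2 ≤ engelD1 w := two_le_engelD1 hwm
  have hdR : (2:ℝ) ≤ (engelD1 w : ℝ) := by exact_mod_cast hd
  have hT : engelT w ∈ Set.Ioc (0:ℝ) 1 := engelT_mem hwm
  have h1 : (engelD1 w : ℝ) - 1 ≤ 1 / engelT w := by
    have h2 := engelT_le hwm
    rw [le_div_iff₀ hT.1]
    rw [le_div_iff₀ (by linarith : (0:ℝ) < (engelD1 w:ℝ) - 1)] at h2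
    linarith
  have h3 : (engelD1 w - 1 : ℕ) ≤ ⌊1 / engelT w⌋₊ := by
    apply Nat.le_floor
    push_cast [Nat.cast_sub (by omega : 1 ≤ engelD1 w)]
    exact h1
  unfold engelD1 at *
  omega

lemma irrational_engelT {x : ℝ} (h : Irrational x) : Irrational (engelT x) := by
  unfold engelT
  have hne : engelD1 x ≠ 0 := by unfold engelD1; omega
  have h1 : Irrational ((engelD1 x : ℝ) * x) := h.natCast_mul hne
  simpa using h1.sub_natCast 1

lemma irrational_engelIter {x : ℝ} (h : Irrational x) (n : ℕ) :
    Irrational (engelT^[n] x) := by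
  induction n with
  | zero => simpa using h
  | succ n ih => rw [Function.iterate_succ_apply']; exact irrational_engelT ih

lemma irrational_ne_div {w : ℝ} (hw : Irrational w) (d : ℕ) :
    w ≠ 1/((d:ℝ)-1) := by
  intro hcontra
  have : (((1/((d:ℚ)-1)) : ℚ) : ℝ) = 1/((d:ℝ)-1) := by push_cast; ring
  rw [hcontra, ← this] at hw
  exact (Rat.not_irrational _) hw

lemma engel_locally_const {x : ℝ} (hx : x ∈ Set.Ioc (0:ℝ) 1) (hirr : Irrational x) (n : ℕ) :
    ∃ U : Set ℝ, IsOpen U ∧ x ∈ U ∧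
      (∃ A B : ℝ, 0 < A ∧ ∀ y ∈ U, engelT^[n] y = A * y + B) ∧
      ∀ y ∈ U, ∀ j, j < n → engelDigit y j = engelDigit x j := by
  induction n with
  | zero =>
      exact ⟨Set.univ, isOpen_univ, trivial, ⟨1, 0, one_pos, fun y _ => by simp⟩,
        fun y _ j hj => absurd hj (by omega)⟩
  | succ n ih =>
      obtain ⟨U, hUo, hxU, ⟨A, B, hA, hAB⟩, hdig⟩ := ih
      set w := engelT^[n] x with hwdef
      have hwm : w ∈ Set.Ioc (0:ℝ) 1 := engelIter_mem hx n
      have hwirr : Irrational w := irrational_engelIter hirr n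
      set d := engelD1 w with hddef
      have hd : 2 ≤ d := two_le_engelD1 hwm
      have hdR : (2:ℝ) ≤ (d:ℝ) := by exact_mod_cast hd
      have hlt : 1/(d:ℝ) < w := by
        have h := inv_lt_engelD1 hwm.1
        rw [div_lt_iff₀ hwm.1] at h
        rw [div_lt_iff₀ (by linarith : (0:ℝ) < (d:ℝ))]
        linarith
      have hle : w < 1/((d:ℝ)-1) := by
        have h1 : (d:ℝ) - 1 ≤ 1 / w := engelD1_sub_one_le_inv hwm.1
        have h2 : w ≤ 1/((d:ℝ)-1) := by
          rw [le_div_iff₀ (by linarith : (0:ℝ) < (d:ℝ)-1)]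
          rw [le_div_iff₀ hwm.1] at h1
          linarith
        exact lt_of_le_of_ne h2 (irrational_ne_div hwirr d)
      set U' := U ∩ (fun y => A*y+B) ⁻¹' (Set.Ioo (1/(d:ℝ)) (1/((d:ℝ)-1))) with hU'def
      have hU'o : IsOpen U' :=
        hUo.inter (isOpen_Ioo.preimage (by continuity))
      have hxU' : x ∈ U' := by
        refine ⟨hxU, ?_⟩
        simp only [Set.mem_preimage]
        rw [← hAB x hxU]
        exact ⟨hlt, hle⟩
      have hTn : ∀ y ∈ U', engelT^[n] y ∈ Set.Ioo (1/(d:ℝ)) (1/((d:ℝ)-1)) := by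
        intro y hy
        rw [hAB y hy.1]
        exact hy.2
      have hDn : ∀ y ∈ U', engelD1 (engelT^[n] y) = d := fun y hy =>
        engelD1_eq hd (hTn y hy).1 (le_of_lt (hTn y hy).2)
      refine ⟨U', hU'o, hxU', ⟨(d:ℝ)*A, (d:ℝ)*B - 1, by positivity, ?_⟩, ?_⟩
      · intro y hy
        rw [Function.iterate_succ_apply']
        have hstep : engelT (engelT^[n] y)
            = (engelD1 (engelT^[n] y) : ℝ) * engelT^[n] y - 1 := rfl
        rw [hstep, hDn y hy, hAB y hy.1]
        ring
      · intro y hy j hj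
        rcases Nat.lt_succ_iff_lt_or_eq.mp hj with h | rfl
        · exact hdig y hy.1 j h
        · show engelDigit y j = engelDigit x j
          unfold engelDigit
          rw [hDn y hy]

/-- Auxiliary: apply the inverse Engel branches with the digits of `a` to the seed `y`. -/
noncomputable def engelApprox (a : ℝ) (m : ℕ) (y : ℝ) : ℕ → ℝ
  | 0 => y
  | i+1 => (engelApprox a m y i + 1) / (engelDigit a (m - 1 - i) : ℝ)

lemma engel_key (ψ : ℕ → ℝ) (hnonneg : ∀ t, 2 ≤ t → 0 ≤ ψ t)
    (hunbdd : ∀ M : ℕ, ∃ t, M ≤ t ∧ 2 ≤ t ∧ 0 < ψ t)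
    {a ε : ℝ} (ha : a ∈ Set.Ioc (0:ℝ) 1) (hε : 0 < ε) (N : ℝ) :
    ∃ x ∈ Set.Ioc (0:ℝ) 1, Irrational x ∧ |x - a| < ε ∧
      ∃ m : ℕ, N < ∑ n ∈ Finset.range m, ψ (engelDigit x n) := by
  obtain ⟨m, hm⟩ := exists_pow_lt_of_lt_one hε (by norm_num : (1/2 : ℝ) < 1)
  obtain ⟨t, htge, ht2, htψ⟩ := hunbdd (engelDigit a m)
  have htR2 : (2:ℝ) ≤ (t:ℝ) := by exact_mod_cast ht2
  have ht0 : (0:ℝ) < (t:ℝ) := by linarith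
  have htm1 : (0:ℝ) < (t:ℝ) - 1 := by linarith
  obtain ⟨k, hk⟩ := exists_nat_gt (N / ψ t)
  have hNk : N < (k:ℝ) * ψ t := by rw [div_lt_iff₀ htψ] at hk; linarith
  set p : ℝ := 1/((t:ℝ)-1) with hp
  set r : ℝ := 1/((t:ℝ)^(k+1)*((t:ℝ)-1)) with hrdef
  have hr0 : 0 < r := by positivity
  obtain ⟨δ, hδirr, hδ0, hδr⟩ := exists_irrational_btwn hr0
  have hbound : ∀ j, j ≤ k → (t:ℝ)^j * δ < 1/((t:ℝ)*((t:ℝ)-1)) := by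
    intro j hj
    have h1 : (t:ℝ)^j * δ < (t:ℝ)^j * r :=
      mul_lt_mul_of_pos_left hδr (pow_pos ht0 j)
    have h2 : (t:ℝ)^j * r ≤ (t:ℝ)^k * r := by
      apply mul_le_mul_of_nonneg_right _ (le_of_lt hr0)
      exact pow_le_pow_right₀ (by linarith) hj
    have h3 : (t:ℝ)^k * r = 1/((t:ℝ)*((t:ℝ)-1)) := by
      rw [hrdef]
      field_simp
      ring
    linarith
  set y : ℝ := p - δ with hy
  have hyirr : Irrational y := by
    have hq : ((((1:ℚ)/((t:ℚ)-1)) : ℚ) : ℝ) = p := by rw [hp]; push_cast; ring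
    have := hδirr.ratCast_sub (q := (1:ℚ)/((t:ℚ)-1))
    rwa [hq] at this
  have hident : p - 1/((t:ℝ)*((t:ℝ)-1)) = 1/(t:ℝ) := by
    rw [hp]; field_simp
  have hyp : y < p := by rw [hy]; linarith
  have hy_lb : 1/(t:ℝ) < y := by
    have h0 := hbound 0 (Nat.zero_le k)
    rw [pow_zero, one_mul] at h0
    rw [hy]; linarith
  have hy0 : 0 < y := lt_trans (by positivity) hy_lb
  have hy1 : y ≤ 1 := by
    have hp1 : p ≤ 1 := by rw [hp, div_le_one htm1]; linarith
    linarith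
  have hy_mem : y ∈ Set.Ioc (0:ℝ) 1 := ⟨hy0, hy1⟩
  have htp : (t:ℝ) * p - 1 = p := by rw [hp]; field_simp; ring
  have hiter_y : ∀ j, j ≤ k → engelT^[j] y = p - (t:ℝ)^j * δ := by
    intro j hj
    induction j with
    | zero => simp [hy]
    | succ j ih =>
      have hj' : j ≤ k := by omega
      rw [Function.iterate_succ_apply', ih hj']
      have hw_lb : 1/(t:ℝ) < p - (t:ℝ)^j * δ := by
        have := hbound j hj'
        linarith
      have hw_ub : p - (t:ℝ)^j * δ ≤ p := by
        nlinarith [pow_pos ht0 j]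
      rw [engelT_eq ht2 hw_lb (hp ▸ hw_ub)]
      rw [pow_succ]
      linear_combination htp
  have hdig_y : ∀ j, j < k → engelDigit y j = t := by
    intro j hj
    have hj' : j ≤ k := le_of_lt hj
    unfold engelDigit
    rw [hiter_y j hj']
    apply engelD1_eq ht2
    · have := hbound j hj'; linarith
    · have hw_ub : p - (t:ℝ)^j * δ ≤ p := by nlinarith [pow_pos ht0 j]
      rw [hp] at hw_ub; exact hw_ub
  -- downward construction along the digits of `a`
  have hmono := engelDigit_mono ha
  have he2 : ∀ j, 2 ≤ engelDigit a j := two_le_engelDigit ha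
  have hmain : ∀ i, i ≤ m →
      (engelApprox a m y i ∈ Set.Ioc (0:ℝ) 1) ∧ Irrational (engelApprox a m y i) ∧
      engelT^[i] (engelApprox a m y i) = y ∧
      engelApprox a m y i ≤ 1/((engelDigit a (m - i) : ℝ) - 1) ∧
      |engelApprox a m y i - engelT^[m-i] a| ≤ (1/2)^i := by
    intro i
    induction i with
    | zero =>
      intro _
      have he : (2:ℝ) ≤ (engelDigit a m : ℝ) := by exact_mod_cast he2 m
      have hetR : ((engelDigit a m : ℝ)) ≤ (t:ℝ) := by exact_mod_cast htge
      refine ⟨hy_mem, hyirr, by simp [engelApprox], ?_, ?_⟩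
      · show y ≤ 1/((engelDigit a (m-0) : ℝ) - 1)
        rw [Nat.sub_zero]
        have : p ≤ 1/((engelDigit a m : ℝ) - 1) := by
          rw [hp]
          apply one_div_le_one_div_of_le (by linarith) (by linarith)
        linarith
      · show |engelApprox a m y 0 - engelT^[m-0] a| ≤ (1/2:ℝ)^0
        rw [Nat.sub_zero, pow_zero]
        have hma := engelIter_mem ha m
        have : engelApprox a m y 0 = y := rfl
        rw [this, abs_le]
        constructor <;> [linarith [hma.2]; linarith [hma.1]]
    | succ i ih =>
      intro hi1
      have hi : i ≤ m := by omega
      obtain ⟨hmem, hirr, hit, hub, hdist⟩ := ih hi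
      have hd2 : 2 ≤ engelDigit a (m - 1 - i) := he2 _
      have hd2R : (2:ℝ) ≤ (engelDigit a (m-1-i) : ℝ) := by exact_mod_cast hd2
      have hdle : engelDigit a (m-1-i) ≤ engelDigit a (m - i) := hmono (by omega)
      have hdleR : ((engelDigit a (m-1-i) : ℝ)) ≤ (engelDigit a (m-i) : ℝ) := by
        exact_mod_cast hdle
      have hub' : engelApprox a m y i ≤ 1/((engelDigit a (m-1-i) : ℝ) - 1) := by
        refine hub.trans ?_
        apply one_div_le_one_div_of_le (by linarith) (by linarith)
      obtain ⟨hbD, hbT, hblb, hbub⟩ := engel_branch hd2 hmem.1 hub'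
      have happ : engelApprox a m y (i+1)
          = (engelApprox a m y i + 1)/((engelDigit a (m-1-i)):ℝ) := rfl
      have hmem' : engelApprox a m y (i+1) ∈ Set.Ioc (0:ℝ) 1 := by
        rw [happ]
        constructor
        · exact lt_trans (by positivity) hblb
        · refine hbub.trans ?_
          rw [div_le_one (by linarith)]; linarith
      have hirr' : Irrational (engelApprox a m y (i+1)) := by
        rw [happ]
        have h1 : Irrational (engelApprox a m y i + 1) := by
          simpa using hirr.add_natCast 1
        exact h1.div_natCast (by omega)
      refine ⟨hmem', hirr', ?_, ?_, ?_⟩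
      · rw [Function.iterate_succ_apply, happ, hbT, hit]
      · have hmi : m - (i+1) = m - 1 - i := by omega
        rw [hmi, happ]
        exact hbub
      · have hmi : m - (i+1) = m - 1 - i := by omega
        have hmi2 : m - i = (m - 1 - i) + 1 := by omega
        have hrel : engelT^[(m-1-i)+1] a
            = (engelDigit a (m-1-i) : ℝ) * engelT^[m-1-i] a - 1 := by
          rw [Function.iterate_succ_apply']; rfl
        have hd0 : (0:ℝ) < (engelDigit a (m-1-i) : ℝ) := by linarith
        have hTa : engelT^[m-1-i] a = (engelT^[m-i] a + 1)/((engelDigit a (m-1-i)):ℝ) := by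
          rw [hmi2, hrel]
          field_simp
          ring
        have hdiff : engelApprox a m y (i+1) - engelT^[m-(i+1)] a
            = (engelApprox a m y i - engelT^[m-i] a)/((engelDigit a (m-1-i)):ℝ) := by
          rw [hmi, happ, hTa]; ring
        rw [hdiff, abs_div, abs_of_pos hd0]
        have hstep : |engelApprox a m y i - engelT^[m-i] a| / ((engelDigit a (m-1-i)):ℝ)
            ≤ (1/2:ℝ)^i / 2 :=
          div_le_div₀ (by positivity) hdist (by norm_num) (by linarith)
        refine hstep.trans ?_
        rw [pow_succ]; ring_nf; linarith [pow_nonneg (by norm_num : (0:ℝ) ≤ 1/2) i]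
  obtain ⟨hx_mem, hx_irr, hx_it, _, hx_dist⟩ := hmain m le_rfl
  rw [Nat.sub_self, Function.iterate_zero_apply] at hx_dist
  refine ⟨engelApprox a m y m, hx_mem, hx_irr, lt_of_le_of_lt hx_dist hm, m + k, ?_⟩
  have hdx : ∀ j, j < k → engelDigit (engelApprox a m y m) (m+j) = t := by
    intro j hj
    unfold engelDigit
    rw [show m + j = j + m from Nat.add_comm m j, Function.iterate_add_apply, hx_it]
    exact hdig_y j hj
  have hIco : ∑ n ∈ Finset.Ico m (m+k), ψ (engelDigit (engelApprox a m y m) n)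
      = (k:ℝ) * ψ t := by
    rw [Finset.sum_Ico_eq_sum_range]
    simp only [add_tsub_cancel_left]
    rw [Finset.sum_congr rfl (fun i hi => by rw [hdx i (Finset.mem_range.1 hi)])]
    rw [Finset.sum_const, Finset.card_range, nsmul_eq_mul]
  have hsubset : Finset.Ico m (m+k) ⊆ Finset.range (m+k) := by
    intro n hn
    simp only [Finset.mem_Ico] at hn
    simp only [Finset.mem_range]
    omega
  have hle := Finset.sum_le_sum_of_subset_of_nonneg hsubset
    (fun n _ _ => hnonneg _ (two_le_engelDigit hx_mem n))
  rw [hIco] at hle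
  linarith

/-- If `ψ : {2,3,…} → [0,∞)` has unbounded support, then the divergence set
`D_ψ = {x ∈ (0,1] : Σₙ ψ(dₙ(x)) = ∞}` contains a dense `G_δ` subset of `(0,1]`;
in particular it is comeager in `(0,1]`. -/
theorem divergence_set_comeager (ψ : ℕ → ℝ)
    (hnonneg : ∀ t, 2 ≤ t → 0 ≤ ψ t)
    (hunbdd : ∀ M : ℕ, ∃ t, M ≤ t ∧ 2 ≤ t ∧ 0 < ψ t) :
    (∃ G : Set (Set.Ioc (0 : ℝ) 1), IsGδ G ∧ Dense G ∧
        ∀ x ∈ G, ¬ Summable (fun n : ℕ => ψ (engelDigit (x : ℝ) n))) ∧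
    IsMeagre {x : Set.Ioc (0 : ℝ) 1 | Summable fun n : ℕ => ψ (engelDigit (x : ℝ) n)} := by
  classical
  set F : ℕ → ℝ → ℝ := fun m y => ∑ n ∈ Finset.range m, ψ (engelDigit y n) with hF
  set Ut : ℕ → Set ℝ := fun N => ⋃ m, interior {y : ℝ | (N:ℝ) < F m y} with hUt
  have hUopen : ∀ N, IsOpen (Ut N) := fun N => isOpen_iUnion fun m => isOpen_interior
  have hx_in : ∀ (N : ℕ) (x : ℝ), x ∈ Set.Ioc (0:ℝ) 1 → Irrational x →
      (∃ m, (N:ℝ) < F m x) → x ∈ Ut N := by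
    rintro N x hx hirr ⟨m, hsum⟩
    obtain ⟨U, hUo, hxU, -, hdig⟩ := engel_locally_const hx hirr m
    refine Set.mem_iUnion.2 ⟨m, ?_⟩
    rw [mem_interior]
    refine ⟨U, ?_, hUo, hxU⟩
    intro z hz
    show (N:ℝ) < F m z
    have hcong : F m z = F m x :=
      Finset.sum_congr rfl fun n hn => by rw [hdig z hz n (Finset.mem_range.1 hn)]
    rw [hcong]; exact hsum
  have hmeet : ∀ (N : ℕ) (c d : ℝ), c < d → Set.Ioo c d ⊆ Set.Ioc (0:ℝ) 1 →
      (Set.Ioo c d ∩ Ut N).Nonempty := by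
    intro N c d hcd hsub
    have haIoo : (c + d)/2 ∈ Set.Ioo c d := ⟨by linarith, by linarith⟩
    have ha : (c + d)/2 ∈ Set.Ioc (0:ℝ) 1 := hsub haIoo
    have hε : (0:ℝ) < (d - c)/2 := by linarith
    obtain ⟨x, hx, hirr, hdist, m, hsum⟩ := engel_key ψ hnonneg hunbdd ha hε (N:ℝ)
    have habs := abs_lt.1 hdist
    have hxIoo : x ∈ Set.Ioo c d := ⟨by linarith [habs.1], by linarith [habs.2]⟩
    exact ⟨x, hxIoo, hx_in N x hx hirr ⟨m, hsum⟩⟩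
  set W : ℕ → Set ℝ := fun N => Ut N ∪ (Set.Icc (0:ℝ) 1)ᶜ with hW
  have hWopen : ∀ N, IsOpen (W N) := fun N => (hUopen N).union isClosed_Icc.isOpen_compl
  have hWdense : ∀ N, Dense (W N) := by
    intro N
    rw [dense_iff_inter_open]
    rintro O hO ⟨x0, hx0⟩
    obtain ⟨ρ, hρ, hball⟩ := Metric.isOpen_iff.1 hO x0 hx0
    have hballIoo : Set.Ioo (x0 - ρ) (x0 + ρ) ⊆ O := by
      intro z hz
      exact hball (by
        rw [Metric.mem_ball, Real.dist_eq, abs_lt]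
        exact ⟨by linarith [hz.1], by linarith [hz.2]⟩)
    by_cases hcase : Set.Ioo (x0 - ρ) (x0 + ρ) ⊆ Set.Icc (0:ℝ) 1
    · have hx0Icc : x0 ∈ Set.Icc (0:ℝ) 1 := hcase ⟨by linarith, by linarith⟩
      have h0 : (0:ℝ) ≤ x0 - ρ := by
        by_contra h
        push_neg at h
        have hξ : (x0 - ρ)/2 ∈ Set.Ioo (x0 - ρ) (x0 + ρ) :=
          ⟨by linarith, by linarith [hx0Icc.1]⟩
        have := (hcase hξ).1
        linarith
      have h1 : x0 + ρ ≤ 1 := by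
        by_contra h
        push_neg at h
        have hξ : (x0 + ρ + 1)/2 ∈ Set.Ioo (x0 - ρ) (x0 + ρ) :=
          ⟨by linarith [hx0Icc.2], by linarith⟩
        have := (hcase hξ).2
        linarith
      obtain ⟨z, hzIoo, hzU⟩ := hmeet N (x0 - ρ) (x0 + ρ) (by linarith)
        (fun x hx => ⟨lt_of_le_of_lt h0 hx.1, le_of_lt (lt_of_lt_of_le hx.2 h1)⟩)
      exact ⟨z, hballIoo hzIoo, Or.inl hzU⟩
    · obtain ⟨ξ, hξIoo, hξ⟩ := Set.not_subset.1 hcase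
      exact ⟨ξ, hballIoo hξIoo, Or.inr hξ⟩
  have hGtilde : Dense (⋂ N : ℕ, W N) := dense_iInter_of_isOpen_nat hWopen hWdense
  set G : Set (Set.Ioc (0:ℝ) 1) := ⋂ N : ℕ, (Subtype.val ⁻¹' Ut N) with hG
  have hGδ : IsGδ G := IsGδ.iInter fun N => ((hUopen N).preimage continuous_subtype_val).isGδ
  have hGdense : Dense G := by
    rw [dense_iff_inter_open]
    rintro V hV ⟨x0, hx0⟩
    obtain ⟨O, hOo, rfl⟩ := isOpen_induced_iff.1 hV
    have hx0O : (x0 : ℝ) ∈ O := hx0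
    obtain ⟨ρ, hρ, hball⟩ := Metric.isOpen_iff.1 hOo _ hx0O
    have hv0 : (0:ℝ) < x0 := x0.2.1
    have hv1 : (x0:ℝ) ≤ 1 := x0.2.2
    have hcv : max ((x0:ℝ) - ρ) ((x0:ℝ)/2) < x0 := max_lt (by linarith) (by linarith)
    have hne : (Set.Ioo (max ((x0:ℝ) - ρ) ((x0:ℝ)/2)) (x0:ℝ)).Nonempty := by
      refine ⟨(max ((x0:ℝ) - ρ) ((x0:ℝ)/2) + (x0:ℝ))/2, ?_, ?_⟩ <;> linarith
    obtain ⟨z, hzIoo, hzW⟩ := hGtilde.inter_open_nonempty _ isOpen_Ioo hne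
    have hz1 : z < (x0:ℝ) := hzIoo.2
    have hz2 : max ((x0:ℝ) - ρ) ((x0:ℝ)/2) < z := hzIoo.1
    have hz0 : 0 < z := lt_of_le_of_lt (by positivity) (lt_of_le_of_lt (le_max_right _ _) hz2)
    have hz01 : z ∈ Set.Ioc (0:ℝ) 1 := ⟨hz0, le_of_lt (lt_of_lt_of_le hz1 hv1)⟩
    have hzO : z ∈ O := hball (by
      rw [Metric.mem_ball, Real.dist_eq, abs_lt]
      constructor
      · linarith [le_max_left ((x0:ℝ) - ρ) ((x0:ℝ)/2)]
      · linarith)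
    have hzU : ∀ N, z ∈ Ut N := by
      intro N
      have hzWN : z ∈ W N := Set.mem_iInter.1 hzW N
      rcases hzWN with h | h
      · exact h
      · exact absurd ⟨le_of_lt hz0, hz01.2⟩ h
    exact ⟨⟨z, hz01⟩, hzO, Set.mem_iInter.2 fun N => hzU N⟩
  have hdiv : ∀ x ∈ G, ¬ Summable (fun n : ℕ => ψ (engelDigit (x : ℝ) n)) := by
    intro x hxG hsummable
    have hfx : ∀ n, 0 ≤ ψ (engelDigit (x:ℝ) n) := fun n => hnonneg _ (two_le_engelDigit x.2 n)
    obtain ⟨N, hN⟩ := exists_nat_gt (∑' n, ψ (engelDigit (x:ℝ) n))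
    have hxU : (x:ℝ) ∈ Ut N := Set.mem_iInter.1 hxG N
    obtain ⟨m, hmem⟩ := Set.mem_iUnion.1 hxU
    have hm : (x:ℝ) ∈ {y : ℝ | (N:ℝ) < F m y} := interior_subset hmem
    rw [Set.mem_setOf_eq] at hm
    have hle : F m (x:ℝ) ≤ ∑' n, ψ (engelDigit (x:ℝ) n) :=
      hsummable.sum_le_tsum (Finset.range m) (fun n _ => hfx n)
    linarith
  refine ⟨⟨G, hGδ, hGdense, hdiv⟩, ?_⟩
  have hGres : G ∈ residual _ := residual_of_dense_Gδ hGδ hGdense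
  apply Filter.mem_of_superset hGres
  intro x hx
  exact hdiv x hx
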